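/- arXiv:math/0411170 — 4 statements merged into one kernel-verified Lean document; each statement's English description precedes it below -/
import Mathlib

section
/- Let (R, 𝔪) be a regular local ring of prime characteristic p > 0, and let 𝔞 ⊆ 𝔪 and J ⊆ 𝔪 be nonzero ideals with 𝔞 contained in the radical of J. If 𝔞 ⊆ J^s for a positive integer s and J can be generated by m elements, then c^J(𝔞) ≤ m/s. -/
open Filter Topology IsLocalRing

/-- A Noetherian local ring is *regular* if its maximal ideal can be generated by
`dim R` elements. -/
def IsRegularLocalRing' (R : Type*) [CommRing R] [IsLocalRing R] : Prop :=
  IsNoetherianRing R ∧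
    ∃ s : Finset R, Ideal.span (s : Set R) = IsLocalRing.maximalIdeal R ∧
      (s.card : WithBot (WithTop ℕ)) = ringKrullDim R

/-- The Frobenius power `I^{[q]}`: the ideal generated by the `q`-th powers of the
elements of `I`. -/
def Ideal.frobPow {R : Type*} [CommRing R] (I : Ideal R) (q : ℕ) : Ideal R :=
  Ideal.span ((fun x => x ^ q) '' (I : Set R))

/-- `ν_𝔞^J(q) = max { r : 𝔞^r ⊄ J^{[q]} }`. -/
noncomputable def fnu {R : Type*} [CommRing R] (a J : Ideal R) (q : ℕ) : ℕ :=
  sSup {r : ℕ | ¬ a ^ r ≤ J.frobPow q}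

/-- `ν_f^J(q) = max { r : f^r ∉ J^{[q]} }`. -/
noncomputable def fnuE {R : Type*} [CommRing R] (f : R) (J : Ideal R) (q : ℕ) : ℕ :=
  sSup {r : ℕ | f ^ r ∉ J.frobPow q}

/-- Pigeonhole: a power of a finitely generated ideal lands in the span of the
`q`-th powers of the generators. -/
lemma span_pow_le_span_pow_image {R : Type*} [CommRing R] (t : Finset R) (q : ℕ) :
    Ideal.span (t : Set R) ^ (t.card * q + 1) ≤
      Ideal.span ((fun x => x ^ q) '' (t : Set R)) := by
  classical
  induction t using Finset.induction with
  | empty => simp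
  | @insert a t' ha ih =>
    have hexp : (insert a t').card * q + 1 = q + (t'.card * q + 1) := by
      rw [Finset.card_insert_of_notMem ha]; ring
    rw [Finset.coe_insert, Ideal.span_insert, hexp]
    refine le_trans (Ideal.sup_pow_add_le_pow_sup_pow (n := q) (m := t'.card * q + 1))
      (sup_le ?_ ?_)
    · rw [Ideal.span_singleton_pow]
      refine Ideal.span_le.mpr ?_
      rintro x rfl
      exact Ideal.subset_span ⟨a, Set.mem_insert a _, rfl⟩
    · refine ih.trans (Ideal.span_mono ?_)
      exact Set.image_mono (Set.subset_insert a _)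

lemma pow_le_frobPow {R : Type*} [CommRing R] {J : Ideal R} {m : ℕ} {t : Finset R}
    (ht : Ideal.span (t : Set R) = J) (htcard : t.card = m) (q : ℕ) :
    J ^ (m * q + 1) ≤ J.frobPow q := by
  subst ht htcard
  refine (span_pow_le_span_pow_image t q).trans (Ideal.span_mono ?_)
  exact Set.image_mono fun x hx => Ideal.subset_span hx

/-- If `𝔞 ⊆ J^s` and `J` is generated by `m` elements, then `c^J(𝔞) ≤ m/s`. -/
theorem stmt_8 {R : Type*} [CommRing R] [IsLocalRing R]
    (hR : IsRegularLocalRing' R) (p : ℕ) (hp : p.Prime) [CharP R p]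
    (a J : Ideal R) (ha0 : a ≠ ⊥) (ham : a ≤ maximalIdeal R)
    (hJ0 : J ≠ ⊥) (hJm : J ≤ maximalIdeal R) (haJ : a ≤ J.radical)
    (s : ℕ) (hs : 1 ≤ s) (haJs : a ≤ J ^ s)
    (m : ℕ) (t : Finset R) (ht : Ideal.span (t : Set R) = J) (htcard : t.card = m)
    (c : ℝ)
    (hc : Tendsto (fun e : ℕ => (fnu a J (p ^ e) : ℝ) / (p : ℝ) ^ e) atTop (𝓝 c)) :
    c ≤ (m : ℝ) / s := by
  have hs0 : (0 : ℝ) < s := by exact_mod_cast hs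
  refine le_of_tendsto hc (Eventually.of_forall fun e => ?_)
  set q : ℕ := p ^ e with hq
  have hp0 : (0 : ℝ) < (p : ℝ) := by exact_mod_cast hp.pos
  have hq0 : (0 : ℝ) < (p : ℝ) ^ e := by positivity
  -- key : for all r in the defining set, s * r ≤ m * q
  have key : ∀ r ∈ {r : ℕ | ¬ a ^ r ≤ J.frobPow q}, r ≤ m * q / s := by
    intro r hr
    rw [Nat.le_div_iff_mul_le hs]
    by_contra hle
    push_neg at hle
    apply hr
    calc a ^ r ≤ (J ^ s) ^ r := Ideal.pow_right_mono haJs r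
      _ = J ^ (s * r) := by rw [← pow_mul]
      _ ≤ J ^ (m * q + 1) := Ideal.pow_le_pow_right (by rw [mul_comm s r]; omega)
      _ ≤ J.frobPow q := pow_le_frobPow ht htcard q
  have hnu : fnu a J q ≤ m * q / s := csSup_le' key
  have hnu2 : (fnu a J q : ℝ) * s ≤ (m : ℝ) * q := by
    have : fnu a J q * s ≤ m * q := (Nat.le_div_iff_mul_le hs).mp hnu
    exact_mod_cast this
  rw [div_le_div_iff₀ hq0 hs0]
  calc (fnu a J q : ℝ) * s ≤ (m : ℝ) * q := hnu2
    _ = (m : ℝ) * (p : ℝ) ^ e := by rw [hq]; push_cast; ring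
end

section
/- Let (R, 𝔪) be a regular local ring of prime characteristic p > 0, and let 𝔞 ⊆ 𝔪 and J ⊆ 𝔪 be nonzero ideals with 𝔞 contained in the radical of J. Let 𝔞̄ denote the integral closure of 𝔞, i.e. the ideal of all x ∈ R satisfying an equation x^m + a₁x^{m−1} + ⋯ + a_m = 0 with a_i ∈ 𝔞^i for each i. Then c^J(𝔞) = c^J(𝔞̄). -/
open Filter Topology IsLocalRing

section aux
variable {R : Type*} [CommRing R]

lemma my_pow_le_pow_left {a b : Ideal R} (h : a ≤ b) (n : ℕ) : a ^ n ≤ b ^ n := by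
  induction n with
  | zero => simp
  | succ n ih => rw [pow_succ, pow_succ]; exact Ideal.mul_mono ih h

lemma integral_pow_mem (a : Ideal R) (x : R) (m : ℕ) (hm : 0 < m)
    (cf : ℕ → R) (hcf : ∀ i : ℕ, 1 ≤ i → i ≤ m → cf i ∈ a ^ i)
    (heq : x ^ m + ∑ i ∈ Finset.Icc 1 m, cf i * x ^ (m - i) = 0) :
    ∀ k, x ^ (k + (m - 1)) ∈ a ^ k := by
  set N : Ideal R := ∑ j ∈ Finset.range m, Ideal.span {x ^ j} * a ^ (m - 1 - j) with hN
  have hterm : ∀ j ∈ Finset.range m, Ideal.span {x ^ j} * a ^ (m - 1 - j) ≤ N := by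
    intro j hj
    rw [hN, Ideal.sum_eq_sup]
    exact Finset.le_sup (f := fun j => Ideal.span {x ^ j} * a ^ (m - 1 - j)) hj
  have hxm1 : x ^ (m - 1) ∈ N := by
    have h1 : x ^ (m - 1) ∈ Ideal.span {x ^ (m - 1)} * a ^ (m - 1 - (m - 1)) := by
      rw [Nat.sub_self, pow_zero, mul_one]
      exact Ideal.subset_span rfl
    exact hterm (m - 1) (Finset.mem_range.2 (by omega)) h1
  have hxmN : x ^ m ∈ a * N := by
    have hx : x ^ m = ∑ i ∈ Finset.Icc 1 m, -(cf i * x ^ (m - i)) := by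
      rw [Finset.sum_neg_distrib]
      linear_combination heq
    rw [hx]
    refine Ideal.sum_mem _ (fun i hi => ?_)
    obtain ⟨hi1, hi2⟩ := Finset.mem_Icc.1 hi
    refine neg_mem ?_
    have hcfi : cf i ∈ a * a ^ (i - 1) := by
      have hai : a * a ^ (i - 1) = a ^ i := by
        rw [← pow_succ']
        congr 1
        omega
      rw [hai]; exact hcf i hi1 hi2
    have hmem : cf i * x ^ (m - i) ∈ (a * a ^ (i - 1)) * Ideal.span {x ^ (m - i)} :=
      Ideal.mul_mem_mul hcfi (Ideal.subset_span rfl)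
    have h3 : m - 1 - (m - i) = i - 1 := by omega
    have hNle : Ideal.span {x ^ (m - i)} * a ^ (i - 1) ≤ N := by
      have h4 := hterm (m - i) (Finset.mem_range.2 (by omega))
      rwa [h3] at h4
    have key : (a * a ^ (i - 1)) * Ideal.span {x ^ (m - i)} ≤ a * N := by
      have h2 : (a * a ^ (i - 1)) * Ideal.span {x ^ (m - i)}
          = a * (Ideal.span {x ^ (m - i)} * a ^ (i - 1)) := by ring
      rw [h2]
      exact Ideal.mul_mono_right hNle
    exact key hmem
  have hstep : Ideal.span {x} * N ≤ a * N := by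
    rw [hN, Finset.mul_sum, Ideal.sum_eq_sup]
    refine Finset.sup_le (fun j hj => ?_)
    have hj' := Finset.mem_range.1 hj
    have he : Ideal.span {x} * (Ideal.span {x ^ j} * a ^ (m - 1 - j))
        = Ideal.span {x ^ (j + 1)} * a ^ (m - 1 - j) := by
      rw [← mul_assoc, Ideal.span_singleton_mul_span_singleton, ← pow_succ']
    rw [he]
    by_cases hjm : j + 1 < m
    · have h4 : a ^ (m - 1 - j) = a * a ^ (m - 1 - (j + 1)) := by
        rw [← pow_succ']; congr 1; omega
      rw [h4, show Ideal.span {x ^ (j+1)} * (a * a ^ (m - 1 - (j+1)))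
        = a * (Ideal.span {x ^ (j+1)} * a ^ (m - 1 - (j+1))) from by ring]
      exact Ideal.mul_mono_right (hterm (j+1) (Finset.mem_range.2 hjm))
    · have hjeq : j = m - 1 := by omega
      subst hjeq
      have h5 : m - 1 + 1 = m := by omega
      have h6 : m - 1 - (m - 1) = 0 := by omega
      rw [h5, h6, pow_zero, mul_one, Ideal.span_le]
      rintro y hy
      rw [Set.mem_singleton_iff.1 hy]
      exact hxmN
  have hpow : ∀ k, Ideal.span {x} ^ k * N ≤ a ^ k * N := by
    intro k
    induction k with
    | zero => simp
    | succ k ih =>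
      calc Ideal.span {x} ^ (k+1) * N = Ideal.span {x} ^ k * (Ideal.span {x} * N) := by ring
        _ ≤ Ideal.span {x} ^ k * (a * N) := Ideal.mul_mono_right hstep
        _ = a * (Ideal.span {x} ^ k * N) := by ring
        _ ≤ a * (a ^ k * N) := Ideal.mul_mono_right ih
        _ = a ^ (k+1) * N := by ring
  intro k
  have hmem2 : x ^ (k + (m - 1)) ∈ Ideal.span {x} ^ k * N := by
    rw [pow_add]
    refine Ideal.mul_mem_mul ?_ hxm1
    rw [Ideal.span_singleton_pow]
    exact Ideal.subset_span rfl
  have hle : Ideal.span {x} ^ k * N ≤ a ^ k := by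
    refine (hpow k).trans ?_
    calc a ^ k * N ≤ a ^ k * ⊤ := Ideal.mul_mono_right le_top
      _ = a ^ k := Ideal.mul_top _
  exact hle hmem2

lemma sup_pow_prod_le (I K a : Ideal R) (t s : ℕ)
    (hI : ∀ k, I ^ (k + t) ≤ a ^ k) (hK : ∀ k, K ^ (k + s) ≤ a ^ k) :
    ∀ l, (I ⊔ K) ^ (l + (t + s)) ≤ a ^ l := by
  intro l
  rw [← Ideal.add_eq_sup, add_pow, Ideal.sum_eq_sup]
  refine Finset.sup_le fun i hi => ?_
  have hi' : i ≤ l + (t + s) := Finset.mem_range_succ_iff.1 hi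
  refine Ideal.mul_le_left.trans ?_
  by_cases h1 : t + l ≤ i
  · refine Ideal.mul_le_left.trans ?_
    have hle : I ^ i ≤ I ^ (l + t) := Ideal.pow_le_pow_right (by omega)
    exact hle.trans (hI l)
  · by_cases h2 : i ≤ t
    · refine Ideal.mul_le_right.trans ?_
      have hle : K ^ (l + (t + s) - i) ≤ K ^ (l + s) := Ideal.pow_le_pow_right (by omega)
      exact hle.trans (hK l)
    · have e1 : I ^ i ≤ a ^ (i - t) := by
        have h := hI (i - t)
        rwa [show i - t + t = i by omega] at h
      have e2 : K ^ (l + (t + s) - i) ≤ a ^ (l + t - i) := by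
        have h := hK (l + t - i)
        rwa [show l + t - i + s = l + (t + s) - i by omega] at h
      refine (Ideal.mul_mono e1 e2).trans ?_
      rw [← pow_add, show i - t + (l + t - i) = l by omega]

lemma span_pow_le_of_forall (a : Ideal R) (S : Finset R)
    (h : ∀ g ∈ S, ∃ t : ℕ, ∀ k, g ^ (k + t) ∈ a ^ k) :
    ∃ s : ℕ, ∀ l : ℕ, (Ideal.span (S : Set R)) ^ (l + s) ≤ a ^ l := by
  classical
  induction S using Finset.induction with
  | empty =>
    refine ⟨0, fun l => ?_⟩
    cases l with
    | zero => simp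
    | succ l =>
      rw [Finset.coe_empty, Ideal.span_empty]
      exact (zero_pow (Nat.succ_ne_zero _)).le.trans bot_le
  | @insert g S hg ih =>
    obtain ⟨t, ht⟩ := h g (Finset.mem_insert_self g S)
    obtain ⟨s, hs⟩ := ih (fun g' hg' => h g' (Finset.mem_insert_of_mem hg'))
    refine ⟨t + s, fun l => ?_⟩
    rw [Finset.coe_insert, Ideal.span_insert]
    refine sup_pow_prod_le _ _ _ t s (fun k => ?_) hs l
    rw [Ideal.span_singleton_pow, Ideal.span_le, Set.singleton_subset_iff]
    exact ht k

lemma frobPow_le (J : Ideal R) {q : ℕ} (hq : 0 < q) : J.frobPow q ≤ J := by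
  rw [Ideal.frobPow, Ideal.span_le]
  rintro y ⟨x, hx, rfl⟩
  exact Ideal.pow_mem_of_mem J hx q hq

lemma le_radical_frobPow (J : Ideal R) {q : ℕ} (hq : 0 < q) :
    J ≤ (J.frobPow q).radical := by
  intro x hx
  exact ⟨q, Ideal.subset_span ⟨x, hx, rfl⟩⟩

lemma fnu_bddAbove {b J : Ideal R} {q : ℕ} (hfg : b.FG)
    (hrad : b ≤ (J.frobPow q).radical) :
    BddAbove {r : ℕ | ¬ b ^ r ≤ J.frobPow q} := by
  obtain ⟨n, hn⟩ := Ideal.exists_pow_le_of_le_radical_of_fg hrad hfg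
  refine ⟨n, fun r hr => ?_⟩
  by_contra h
  push_neg at h
  exact hr ((Ideal.pow_le_pow_right h.le).trans hn)

lemma fnu_nonempty {b J : Ideal R} {q : ℕ} (hF : J.frobPow q ≠ ⊤) :
    Set.Nonempty {r : ℕ | ¬ b ^ r ≤ J.frobPow q} := by
  refine ⟨0, ?_⟩
  simp only [Set.mem_setOf_eq, pow_zero, Ideal.one_eq_top, top_le_iff]
  exact hF

end aux

/-- The F-threshold of an ideal equals the F-threshold of its integral closure:
`c^J(𝔞) = c^J(𝔞̄)`. -/
theorem stmt_10 {R : Type*} [CommRing R] [IsLocalRing R]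
    (hR : IsRegularLocalRing' R) (p : ℕ) (hp : p.Prime) [CharP R p]
    (a J : Ideal R) (ha0 : a ≠ ⊥) (ham : a ≤ maximalIdeal R)
    (hJ0 : J ≠ ⊥) (hJm : J ≤ maximalIdeal R) (haJ : a ≤ J.radical)
    (abar : Ideal R)
    (habar : ∀ x : R, x ∈ abar ↔
      ∃ m : ℕ, 0 < m ∧ ∃ cf : ℕ → R, (∀ i : ℕ, 1 ≤ i → i ≤ m → cf i ∈ a ^ i) ∧
        x ^ m + ∑ i ∈ Finset.Icc 1 m, cf i * x ^ (m - i) = 0)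
    (c cbar : ℝ)
    (hc : Tendsto (fun e : ℕ => (fnu a J (p ^ e) : ℝ) / (p : ℝ) ^ e) atTop (𝓝 c))
    (hcbar : Tendsto (fun e : ℕ => (fnu abar J (p ^ e) : ℝ) / (p : ℝ) ^ e) atTop (𝓝 cbar)) :
    c = cbar := by
  haveI : IsNoetherianRing R := hR.1
  -- a ≤ abar
  have hab : a ≤ abar := by
    intro x hx
    rw [habar x]
    refine ⟨1, one_pos, fun _ => -x, ?_, ?_⟩
    · intro i h1 h2
      have : i = 1 := by omega
      subst this
      rw [pow_one]
      exact neg_mem hx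
    · simp
  -- abar ≤ radical a
  have habr : abar ≤ a.radical := by
    intro x hx
    rw [habar x] at hx
    obtain ⟨m, hm, cf, hcf, heq⟩ := hx
    refine ⟨m, ?_⟩
    have hx2 : x ^ m = ∑ i ∈ Finset.Icc 1 m, -(cf i * x ^ (m - i)) := by
      rw [Finset.sum_neg_distrib]
      linear_combination heq
    rw [hx2]
    refine Ideal.sum_mem _ (fun i hi => ?_)
    obtain ⟨hi1, hi2⟩ := Finset.mem_Icc.1 hi
    exact neg_mem (Ideal.mul_mem_right _ _ (Ideal.pow_le_self (by omega) (hcf i hi1 hi2)))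
  -- uniform s with abar^(l+s) ≤ a^l
  obtain ⟨s, hs⟩ : ∃ s : ℕ, ∀ l : ℕ, abar ^ (l + s) ≤ a ^ l := by
    obtain ⟨S, hS⟩ := IsNoetherian.noetherian abar
    obtain ⟨s, hs⟩ := span_pow_le_of_forall a S (fun g hg => by
      have hg' : g ∈ abar := hS ▸ Ideal.subset_span hg
      rw [habar g] at hg'
      obtain ⟨m, hm, cf, hcf, heq⟩ := hg'
      exact ⟨m - 1, integral_pow_mem a g m hm cf hcf heq⟩)
    exact ⟨s, fun l => by rw [← hS]; exact hs l⟩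
  have key : ∀ e : ℕ, fnu a J (p ^ e) ≤ fnu abar J (p ^ e) ∧
      fnu abar J (p ^ e) ≤ fnu a J (p ^ e) + s := by
    intro e
    set q := p ^ e with hq'
    have hq : 0 < q := pow_pos hp.pos e
    have hF : J.frobPow q ≠ ⊤ := by
      intro h
      exact (IsLocalRing.maximalIdeal.isMaximal R).ne_top
        (top_unique (h ▸ ((frobPow_le J hq).trans hJm)))
    have hrad_a : a ≤ (J.frobPow q).radical :=
      haJ.trans ((Ideal.radical_mono (le_radical_frobPow J hq)).trans
        (Ideal.radical_idem _).le)
    have hrad_abar : abar ≤ (J.frobPow q).radical :=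
      habr.trans ((Ideal.radical_mono hrad_a).trans (Ideal.radical_idem _).le)
    have hbdd_a := fnu_bddAbove (IsNoetherian.noetherian a) hrad_a
    have hbdd_abar := fnu_bddAbove (IsNoetherian.noetherian abar) hrad_abar
    have hne_a : Set.Nonempty {r : ℕ | ¬ a ^ r ≤ J.frobPow q} := fnu_nonempty hF
    have hne_abar : Set.Nonempty {r : ℕ | ¬ abar ^ r ≤ J.frobPow q} := fnu_nonempty hF
    constructor
    · refine csSup_le_csSup hbdd_abar hne_a (fun r hr => ?_)
      exact fun hle => hr ((my_pow_le_pow_left hab r).trans hle)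
    · refine csSup_le hne_abar (fun r hr => ?_)
      by_cases h : r ≤ s
      · exact h.trans (Nat.le_add_left s _)
      · have hnle : ¬ a ^ (r - s) ≤ J.frobPow q := by
          intro hle
          refine hr ?_
          calc abar ^ r = abar ^ (r - s + s) := by rw [Nat.sub_add_cancel (by omega)]
            _ ≤ a ^ (r - s) := hs (r - s)
            _ ≤ J.frobPow q := hle
        have hle2 : r - s ≤ fnu a J q := le_csSup hbdd_a hnle
        omega
  have hple : (1 : ℝ) < (p : ℝ) := by exact_mod_cast hp.one_lt
  have hppos : ∀ e : ℕ, (0 : ℝ) < (p : ℝ) ^ e :=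
    fun e => pow_pos (lt_trans zero_lt_one hple) e
  have h1 : c ≤ cbar := by
    refine le_of_tendsto_of_tendsto' hc hcbar (fun e => ?_)
    have := (key e).1
    gcongr
  have h2 : cbar ≤ c := by
    have hzero : Tendsto (fun e : ℕ => (s : ℝ) / (p : ℝ) ^ e) atTop (𝓝 0) := by
      simp_rw [div_eq_mul_inv]
      have hinv : Tendsto (fun e : ℕ => ((p : ℝ) ^ e)⁻¹) atTop (𝓝 0) :=
        tendsto_inv_atTop_zero.comp (tendsto_pow_atTop_atTop_of_one_lt hple)
      simpa using hinv.const_mul (s : ℝ)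
    have hsum := hc.add hzero
    rw [add_zero] at hsum
    refine le_of_tendsto_of_tendsto' hcbar hsum (fun e => ?_)
    rw [← add_div]
    have := (key e).2
    push_cast
    gcongr
    exact_mod_cast this
  exact le_antisymm h1 h2
end

section
/- Let (R, 𝔪) be a regular local ring of prime characteristic p > 0, and let 𝔞 ⊆ 𝔪 and J ⊆ 𝔪 be nonzero ideals with 𝔞 contained in the radical of J. Then for every power q = p^e of p one has c^{J^{[q]}}(𝔞) = q · c^{J}(𝔞). -/
open Filter Topology IsLocalRing

lemma frobPow_frobPow {R : Type*} [CommRing R] (p : ℕ) (hp : p.Prime) [CharP R p]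
    (J : Ideal R) (q k : ℕ) :
    (J.frobPow q).frobPow (p ^ k) = J.frobPow (q * p ^ k) := by
  haveI := Fact.mk hp
  apply le_antisymm
  · rw [Ideal.frobPow, Ideal.span_le]
    rintro _ ⟨y, hy, rfl⟩
    show y ^ p ^ k ∈ _
    have : (y : R) ^ p ^ k = iterateFrobenius R p k y := rfl
    rw [this]
    have hmem : iterateFrobenius R p k y ∈ Ideal.map (iterateFrobenius R p k) (J.frobPow q) :=
      Ideal.mem_map_of_mem _ hy
    rw [Ideal.frobPow, Ideal.map_span] at hmem
    refine Ideal.span_le.mpr ?_ hmem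
    rintro _ ⟨_, ⟨x, hx, rfl⟩, rfl⟩
    have : iterateFrobenius R p k (x ^ q) = x ^ (q * p ^ k) := by
      rw [iterateFrobenius_def, ← pow_mul]
    rw [this]
    exact Ideal.subset_span ⟨x, hx, rfl⟩
  · rw [Ideal.frobPow, Ideal.span_le]
    rintro _ ⟨x, hx, rfl⟩
    show x ^ (q * p ^ k) ∈ _
    have : (x : R) ^ (q * p ^ k) = (x ^ q) ^ p ^ k := by rw [← pow_mul]
    rw [this]
    exact Ideal.subset_span ⟨x ^ q, Ideal.subset_span ⟨x, hx, rfl⟩, rfl⟩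

/-- `c^{J^{[q]}}(𝔞) = q · c^J(𝔞)` for every `q = p^e`. -/
theorem stmt_15 {R : Type*} [CommRing R] [IsLocalRing R]
    (hR : IsRegularLocalRing' R) (p : ℕ) (hp : p.Prime) [CharP R p]
    (a J : Ideal R) (ha0 : a ≠ ⊥) (ham : a ≤ maximalIdeal R)
    (hJ0 : J ≠ ⊥) (hJm : J ≤ maximalIdeal R) (haJ : a ≤ J.radical)
    (e : ℕ) (he : 1 ≤ e) (c cq : ℝ)
    (hc : Tendsto (fun e' : ℕ => (fnu a J (p ^ e') : ℝ) / (p : ℝ) ^ e') atTop (𝓝 c))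
    (hcq : Tendsto (fun e' : ℕ => (fnu a (J.frobPow (p ^ e)) (p ^ e') : ℝ) / (p : ℝ) ^ e')
      atTop (𝓝 cq)) :
    cq = (p : ℝ) ^ e * c := by
  have hp0 : (0 : ℝ) < (p : ℝ) := by exact_mod_cast hp.pos
  have hshift : Tendsto (fun e' : ℕ => (fnu a J (p ^ (e' + e)) : ℝ) / (p : ℝ) ^ (e' + e))
      atTop (𝓝 c) := by
    exact hc.comp (tendsto_add_atTop_nat e)
  have h2 : Tendsto (fun e' : ℕ => (p : ℝ) ^ e *
      ((fnu a J (p ^ (e' + e)) : ℝ) / (p : ℝ) ^ (e' + e))) atTop (𝓝 ((p : ℝ) ^ e * c)) :=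
    hshift.const_mul _
  have heq : (fun e' : ℕ => (fnu a (J.frobPow (p ^ e)) (p ^ e') : ℝ) / (p : ℝ) ^ e')
      = fun e' : ℕ => (p : ℝ) ^ e * ((fnu a J (p ^ (e' + e)) : ℝ) / (p : ℝ) ^ (e' + e)) := by
    funext e'
    have hf : fnu a (J.frobPow (p ^ e)) (p ^ e') = fnu a J (p ^ (e' + e)) := by
      unfold fnu
      rw [frobPow_frobPow p hp, ← pow_add, Nat.add_comm]
    rw [hf, pow_add]
    field_simp
    ring
  rw [heq] at hcq
  exact tendsto_nhds_unique hcq h2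
end

section
/- Let n ≥ 3 be an integer, p a prime, and f = X₁X₂ + X₃² + ⋯ + X_n² in the polynomial ring 𝔽_p[X₁, …, X_n]. Then for every e ≥ 1, f^{p^e − 1} does not belong to the ideal (X₁^{p^e}, …, X_n^{p^e}) (while f^{p^e} does); consequently ν_f(p^e) = p^e − 1 for all e and the F-pure threshold of f at the origin equals 1. -/
open Filter Topology IsLocalRing

/-- A Noetherian local ring is *regular* if its maximal ideal can be generated by
`dim R` elements. -/
def IsRegularLocalRingOld (R : Type*) [CommRing R] [IsLocalRing R] : Prop :=
  IsNoetherianRing R ∧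
    ∃ s : Finset R, Ideal.span (s : Set R) = IsLocalRing.maximalIdeal R ∧
      (s.card : WithBot (WithTop ℕ)) = ringKrullDim R

/-- The quadric `f = X₁X₂ + X₃² + ⋯ + X_n²` over `𝔽_p`. -/
noncomputable def quadricF (n p : ℕ) (hn : 3 ≤ n) : MvPolynomial (Fin n) (ZMod p) :=
  MvPolynomial.X ⟨0, by omega⟩ * MvPolynomial.X ⟨1, by omega⟩ +
    ∑ i ∈ Finset.univ.filter (fun i : Fin n => 2 ≤ (i : ℕ)), MvPolynomial.X i ^ 2

/-- The ideal `(X₁^{p^e}, …, X_n^{p^e})` in `𝔽_p[X₁, …, X_n]`. -/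
noncomputable def frobXIdeal (n p e : ℕ) : Ideal (MvPolynomial (Fin n) (ZMod p)) :=
  Ideal.span (Set.range fun i : Fin n => MvPolynomial.X i ^ p ^ e)


open MvPolynomial

namespace Stmt19Aux

variable {n p : ℕ}

lemma mem_pow (hn : 3 ≤ n) (hp : p.Prime) (e : ℕ) :
    quadricF n p hn ^ p ^ e ∈ frobXIdeal n p e := by
  haveI : Fact p.Prime := ⟨hp⟩
  rw [quadricF, frobXIdeal, add_pow_char_pow, mul_pow, sum_pow_char_pow]
  refine Ideal.add_mem _ ?_ (Ideal.sum_mem _ fun i _ => ?_)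
  · exact Ideal.mul_mem_right _ _ (Ideal.subset_span ⟨_, rfl⟩)
  · rw [← pow_mul, mul_comm 2, pow_mul, sq]
    exact Ideal.mul_mem_right _ _ (Ideal.subset_span ⟨i, rfl⟩)

lemma key_not_mem (hn : 3 ≤ n) (hp : p.Prime) (e : ℕ) :
    (X ⟨0, by omega⟩ * X ⟨1, by omega⟩ : MvPolynomial (Fin n) (ZMod p)) ^ (p ^ e - 1)
      ∉ frobXIdeal n p e := by
  haveI : Fact p.Prime := ⟨hp⟩
  set q := p ^ e with hq
  have hq1 : 1 ≤ q := Nat.one_le_pow _ _ hp.pos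
  intro h
  rw [frobXIdeal, Ideal.mem_span_range_iff_exists_fun] at h
  obtain ⟨c, hc⟩ := h
  set i0 : Fin n := ⟨0, by omega⟩
  set i1 : Fin n := ⟨1, by omega⟩
  have hne : i0 ≠ i1 := by simp [i0, i1, Fin.ext_iff]
  set d : Fin n →₀ ℕ := Finsupp.single i0 (q - 1) + Finsupp.single i1 (q - 1) with hd
  have hdlt : ∀ i, d i < q := by
    intro i
    have := hne
    simp only [hd, Finsupp.add_apply, Finsupp.single_apply]
    split_ifs with h1 h2 <;> first | omega | (exfalso; exact hne (h1.trans h2.symm))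
  have hrhs : coeff d ((X i0 * X i1 : MvPolynomial (Fin n) (ZMod p)) ^ (q - 1)) = 1 := by
    rw [mul_pow, X_pow_eq_monomial, X_pow_eq_monomial, monomial_mul, mul_one, ← hd,
      coeff_monomial, if_pos rfl]
  have hlhs : coeff d (∑ i, c i * (X i : MvPolynomial (Fin n) (ZMod p)) ^ q) = 0 := by
    rw [coeff_sum]
    refine Finset.sum_eq_zero fun i _ => ?_
    rw [X_pow_eq_monomial, coeff_mul_monomial', if_neg]
    intro hle
    have := hle i
    rw [Finsupp.single_apply, if_pos rfl] at this
    exact absurd this (by have := hdlt i; omega)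
  rw [hc, hrhs] at hlhs
  exact one_ne_zero hlhs

noncomputable def psi (n p : ℕ) :
    MvPolynomial (Fin n) (ZMod p) →+* MvPolynomial (Fin n) (ZMod p) :=
  (MvPolynomial.aeval fun i : Fin n => if (i : ℕ) ≤ 1 then X i else 0).toRingHom

lemma psi_mem (hp : p.Prime) (e : ℕ) {g : MvPolynomial (Fin n) (ZMod p)}
    (hg : g ∈ frobXIdeal n p e) : psi n p g ∈ frobXIdeal n p e := by
  have h1 : Ideal.map (psi n p) (frobXIdeal n p e) ≤ frobXIdeal n p e := by
    rw [frobXIdeal, Ideal.map_span, Ideal.span_le]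
    rintro _ ⟨_, ⟨i, rfl⟩, rfl⟩
    simp only [psi, AlgHom.toRingHom_eq_coe, RingHom.coe_coe, map_pow, aeval_X,
      SetLike.mem_coe]
    by_cases h : (i : ℕ) ≤ 1
    · rw [if_pos h]
      exact Ideal.subset_span ⟨i, rfl⟩
    · rw [if_neg h, zero_pow (pow_ne_zero e hp.pos.ne')]
      exact Ideal.zero_mem _
  exact h1 (Ideal.mem_map_of_mem _ hg)

lemma psi_f (hn : 3 ≤ n) (hp : p.Prime) :
    psi n p (quadricF n p hn) = X ⟨0, by omega⟩ * X ⟨1, by omega⟩ := by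
  simp only [quadricF, psi, AlgHom.toRingHom_eq_coe, RingHom.coe_coe, map_add, map_mul,
    map_sum, map_pow, aeval_X]
  rw [if_pos (by norm_num), if_pos (by norm_num)]
  have : ∀ i ∈ Finset.univ.filter (fun i : Fin n => 2 ≤ (i : ℕ)),
      ((if (i : ℕ) ≤ 1 then X i else 0 : MvPolynomial (Fin n) (ZMod p)) ^ 2) = 0 := by
    intro i hi
    rw [Finset.mem_filter] at hi
    rw [if_neg (by omega), zero_pow two_ne_zero]
  rw [Finset.sum_congr rfl this, Finset.sum_const, smul_zero, add_zero]

lemma not_mem (hn : 3 ≤ n) (hp : p.Prime) (e : ℕ) :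
    quadricF n p hn ^ (p ^ e - 1) ∉ frobXIdeal n p e := by
  intro h
  have h2 := psi_mem hp e h
  rw [map_pow, psi_f hn hp] at h2
  exact key_not_mem hn hp e h2

lemma sSup_eq (hn : 3 ≤ n) (hp : p.Prime) (e : ℕ) :
    sSup {r : ℕ | quadricF n p hn ^ r ∉ frobXIdeal n p e} = p ^ e - 1 := by
  have hq1 : 1 ≤ p ^ e := Nat.one_le_pow _ _ hp.pos
  have hset : {r : ℕ | quadricF n p hn ^ r ∉ frobXIdeal n p e} = Set.Iic (p ^ e - 1) := by
    ext r
    simp only [Set.mem_setOf_eq, Set.mem_Iic]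
    constructor
    · intro hr
      by_contra hlt
      push_neg at hlt
      apply hr
      have : quadricF n p hn ^ r = quadricF n p hn ^ p ^ e * quadricF n p hn ^ (r - p ^ e) := by
        rw [← pow_add]; congr 1; omega
      rw [this]
      exact Ideal.mul_mem_right _ _ (mem_pow hn hp e)
    · intro hr hmem
      apply not_mem hn hp e
      have : quadricF n p hn ^ (p ^ e - 1)
          = quadricF n p hn ^ r * quadricF n p hn ^ (p ^ e - 1 - r) := by
        rw [← pow_add]; congr 1; omega
      rw [this]
      exact Ideal.mul_mem_right _ _ hmem
  rw [hset, csSup_Iic]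

end Stmt19Aux

/-- For `f = X₁X₂ + X₃² + ⋯ + X_n²` (`n ≥ 3`): `f^{p^e−1} ∉ (X₁^{p^e}, …, X_n^{p^e})`
while `f^{p^e} ∈ (X₁^{p^e}, …, X_n^{p^e})`, so `ν_f(p^e) = p^e − 1` for all `e ≥ 1`
and the F-pure threshold of `f` at the origin is `1`. -/
theorem stmt_19 (n : ℕ) (hn : 3 ≤ n) (p : ℕ) (hp : p.Prime) :
    (∀ e : ℕ, 1 ≤ e →
      quadricF n p hn ^ (p ^ e - 1) ∉ frobXIdeal n p e ∧
      quadricF n p hn ^ p ^ e ∈ frobXIdeal n p e ∧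
      sSup {r : ℕ | quadricF n p hn ^ r ∉ frobXIdeal n p e} = p ^ e - 1) ∧
    Tendsto
      (fun e : ℕ =>
        ((sSup {r : ℕ | quadricF n p hn ^ r ∉ frobXIdeal n p e} : ℕ) : ℝ) / (p : ℝ) ^ e)
      atTop (𝓝 1) := by
  have key : ∀ e : ℕ, sSup {r : ℕ | quadricF n p hn ^ r ∉ frobXIdeal n p e} = p ^ e - 1 :=
    fun e => Stmt19Aux.sSup_eq hn hp e
  have hppos : (0 : ℝ) < (p : ℝ) := by exact_mod_cast hp.pos
  constructor
  · intro e _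
    exact ⟨Stmt19Aux.not_mem hn hp e, Stmt19Aux.mem_pow hn hp e, key e⟩
  · simp only [key]
    have hp1 : (1 : ℝ) < (p : ℝ) := by exact_mod_cast hp.one_lt
    have h0 : Tendsto (fun e : ℕ => ((p : ℝ) ^ e)⁻¹) atTop (𝓝 0) :=
      tendsto_inv_atTop_zero.comp (tendsto_pow_atTop_atTop_of_one_lt hp1)
    have hcast : ∀ e : ℕ, ((p ^ e - 1 : ℕ) : ℝ) / (p : ℝ) ^ e = 1 - ((p : ℝ) ^ e)⁻¹ := by
      intro e
      have hpe : 1 ≤ p ^ e := Nat.one_le_pow _ _ hp.pos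
      have hne : (p : ℝ) ^ e ≠ 0 := by positivity
      rw [Nat.cast_sub hpe, Nat.cast_pow, Nat.cast_one]
      field_simp
    simp only [hcast]
    have h1 : Tendsto (fun e : ℕ => (1 : ℝ) - ((p : ℝ) ^ e)⁻¹) atTop (𝓝 (1 - 0)) :=
      Tendsto.sub tendsto_const_nhds h0
    simpa using h1
end
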